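/- Let n ≥ 3 and let S be a set of transpositions generating the symmetric group S_n such that the Cayley graph Cay(S_n, S) is normal (i.e., the image of the right regular representation of S_n in Aut(Cay(S_n, S)) is a normal subgroup). Then the automorphism group of Cay(S_n, S) is isomorphic to the direct product S_n × Aut(T(S)), where T(S) is the transposition graph of S. -/

import Mathlib

open Equiv

/-- The Cayley graph of `Sₙ = Perm (Fin n)` with connection set `S`:
vertices `h, g` are adjacent iff `g * h⁻¹ ∈ S` (for a symmetric identity-free
set `S`, such as a set of transpositions, `fromRel` yields exactly this relation). -/
def Cay (n : ℕ) (S : Set (Equiv.Perm (Fin n))) : SimpleGraph (Equiv.Perm (Fin n)) :=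
  SimpleGraph.fromRel (fun h g => g * h⁻¹ ∈ S)

/-- The transposition graph `T(S)` of `S`: vertices `i, j ∈ Fin n` are adjacent
iff the transposition `swap i j ∈ S`. -/
def TransGraph (n : ℕ) (S : Set (Equiv.Perm (Fin n))) : SimpleGraph (Fin n) :=
  SimpleGraph.fromRel (fun i j => Equiv.swap i j ∈ S)

/-- The automorphism group of a graph, as a subgroup of the symmetric group on
its vertex set. -/
def graphAut {V : Type*} (G : SimpleGraph V) : Subgroup (Equiv.Perm V) where
  carrier := {f | ∀ x y, G.Adj (f x) (f y) ↔ G.Adj x y}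
  one_mem' := by intro x y; simp
  mul_mem' := by
    intro a b ha hb x y
    simp only [Equiv.Perm.mul_apply]
    rw [ha, hb]
  inv_mem' := by
    intro a ha x y
    rw [← ha (a⁻¹ x) (a⁻¹ y)]
    simp

/-- The image `R(Sₙ)` of the right regular representation of `Sₙ` inside `Sym(Sₙ)`:
all permutations of the form `x ↦ x * a`. -/
def Rrep (n : ℕ) : Subgroup (Equiv.Perm (Equiv.Perm (Fin n))) where
  carrier := {f | ∃ a : Equiv.Perm (Fin n), f = Equiv.mulRight a}
  one_mem' := ⟨1, by ext x; simp⟩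
  mul_mem' := by
    rintro _ _ ⟨a, rfl⟩ ⟨b, rfl⟩
    exact ⟨b * a, by ext x; simp [mul_assoc]⟩
  inv_mem' := by
    rintro _ ⟨a, rfl⟩
    exact ⟨a⁻¹, by ext x; simp⟩

/-- The image `λ(Sₙ)` of the left regular representation of `Sₙ` inside `Sym(Sₙ)`:
all permutations of the form `x ↦ b⁻¹ * x`. -/
def LrepAll (n : ℕ) : Subgroup (Equiv.Perm (Equiv.Perm (Fin n))) where
  carrier := {f | ∃ b : Equiv.Perm (Fin n), f = Equiv.mulLeft b⁻¹}
  one_mem' := ⟨1, by ext x; simp⟩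
  mul_mem' := by
    rintro _ _ ⟨a, rfl⟩ ⟨b, rfl⟩
    exact ⟨b * a, by ext x; simp [mul_assoc]⟩
  inv_mem' := by
    rintro _ ⟨a, rfl⟩
    exact ⟨a⁻¹, by ext x; simp⟩

/-- The subgroup `λ(Aut(T(S))) = { x ↦ a⁻¹ * x : a ∈ Aut(T(S)) }` of `Sym(Sₙ)`. -/
def Lrep (n : ℕ) (S : Set (Equiv.Perm (Fin n))) :
    Subgroup (Equiv.Perm (Equiv.Perm (Fin n))) where
  carrier := {f | ∃ a ∈ graphAut (TransGraph n S), f = Equiv.mulLeft a⁻¹}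
  one_mem' := ⟨1, one_mem _, by ext x; simp⟩
  mul_mem' := by
    rintro _ _ ⟨a, ha, rfl⟩ ⟨b, hb, rfl⟩
    exact ⟨b * a, mul_mem hb ha, by ext x; simp [mul_assoc]⟩
  inv_mem' := by
    rintro _ ⟨a, ha, rfl⟩
    exact ⟨a⁻¹, inv_mem ha, by ext x; simp⟩

namespace CayFeng
open Equiv Equiv.Perm

variable {n : ℕ} {S : Set (Equiv.Perm (Fin n))}

lemma swap_ne_one' {x y : Fin n} (h : x ≠ y) : Equiv.swap x y ≠ 1 := by
  intro h1
  have : Equiv.swap x y x = (1 : Perm (Fin n)) x := by rw [h1]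
  simp [Equiv.swap_apply_left] at this
  exact h this.symm

lemma isSwap_ne_one {s : Perm (Fin n)} (hs : s.IsSwap) : s ≠ 1 := by
  obtain ⟨x, y, hxy, rfl⟩ := hs
  exact swap_ne_one' hxy

lemma mem_S_ne {i j : Fin n} (hS : ∀ s ∈ S, s.IsSwap) (h : Equiv.swap i j ∈ S) : i ≠ j := by
  rintro rfl
  exact isSwap_ne_one (hS _ h) (by rw [Equiv.swap_self]; rfl)

/-- normal form at a moved point -/
lemma norm_form {s : Perm (Fin n)} {x : Fin n} (hs : s.IsSwap) (hx : s x ≠ x) :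
    ∃ y, y ≠ x ∧ s = Equiv.swap x y := by
  obtain ⟨a, b, hab, rfl⟩ := hs
  rcases (Equiv.swap_apply_ne_self_iff.mp hx).2 with h | h
  · exact ⟨b, fun hh => hab (h ▸ hh.symm), by rw [h]⟩
  · exact ⟨a, fun hh => hab (h ▸ hh), by rw [h, Equiv.swap_comm]⟩

lemma moved_swap_iff {x y z : Fin n} (hxy : x ≠ y) : Equiv.swap x y z ≠ z ↔ z = x ∨ z = y := by
  rw [Equiv.swap_apply_ne_self_iff]; tauto

lemma eq_swap_of_moves {s : Perm (Fin n)} {x y : Fin n} (hs : s.IsSwap)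
    (hx : s x ≠ x) (hy : s y ≠ y) (hxy : x ≠ y) : s = Equiv.swap x y := by
  obtain ⟨b, hbx, rfl⟩ := norm_form hs hx
  rcases (moved_swap_iff hbx.symm).mp hy with h | h
  · exact absurd h.symm hxy
  · rw [h]

lemma noncomm_of_common {s t : Perm (Fin n)} (hs : s.IsSwap) (ht : t.IsSwap) (hst : s ≠ t)
    {x : Fin n} (hsx : s x ≠ x) (htx : t x ≠ x) : s * t ≠ t * s := by
  obtain ⟨b, hbx, rfl⟩ := norm_form hs hsx
  obtain ⟨d, hdx, rfl⟩ := norm_form ht htx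
  have hbd : b ≠ d := fun h => hst (by rw [h])
  intro h
  have h2 := congrArg (fun p : Perm (Fin n) => p b) h
  simp only [Perm.mul_apply, Equiv.swap_apply_of_ne_of_ne hbx hbd,
    Equiv.swap_apply_right, Equiv.swap_apply_left] at h2
  exact hdx (h2.symm)

lemma exists_common_of_noncomm {s t : Perm (Fin n)} (hs : s.IsSwap) (ht : t.IsSwap)
    (h : s * t ≠ t * s) : ∃ x, s x ≠ x ∧ t x ≠ x := by
  by_contra hc
  push_neg at hc
  apply h
  have hss : ∀ z, s (s z) = z := by
    obtain ⟨a, b, hab, rfl⟩ := hs; intro z; exact Equiv.swap_apply_self a b z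
  have htt : ∀ z, t (t z) = z := by
    obtain ⟨a, b, hab, rfl⟩ := ht; intro z; exact Equiv.swap_apply_self a b z
  ext z
  simp only [Perm.mul_apply]
  by_cases hsz : s z = z
  · by_cases htz : t z = z
    · rw [hsz, htz, hsz]
    · -- s fixes z, t moves z; then s must fix t z (else t z common pt)
      have : s (t z) = t z := by
        by_contra hst2
        have := hc (t z) hst2
        exact htz (this.symm.trans (htt z))
      rw [this, hsz]
  · have htz : t z = z := (hc z hsz)
    have : t (s z) = s z := by
      by_contra hts
      have h4 : s (s z) ≠ s z := by rw [hss z]; exact fun e => hsz e.symm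
      exact hts (hc (s z) h4)
    rw [htz, this]

lemma star_sq_ne_one {v b c d : Fin n} (hb : b ≠ v) (hc : c ≠ v) (hd : d ≠ v)
    (hbc : b ≠ c) (hbd : b ≠ d) (hcd : c ≠ d) :
    (Equiv.swap v b * Equiv.swap v c * Equiv.swap v d) ^ 2 ≠ 1 := by
  intro h
  have h2 : ((Equiv.swap v b * Equiv.swap v c * Equiv.swap v d) ^ 2) v
      = (1 : Perm (Fin n)) v := by rw [h]
  have e1 : (Equiv.swap v b * Equiv.swap v c * Equiv.swap v d) v = d := by
    simp only [Perm.mul_apply, Equiv.swap_apply_left,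
      Equiv.swap_apply_of_ne_of_ne hd (Ne.symm hcd),
      Equiv.swap_apply_of_ne_of_ne hd (Ne.symm hbd)]
  have e2 : (Equiv.swap v b * Equiv.swap v c * Equiv.swap v d) d = c := by
    simp only [Perm.mul_apply, Equiv.swap_apply_right, Equiv.swap_apply_left,
      Equiv.swap_apply_of_ne_of_ne hc (Ne.symm hbc)]
  rw [sq, Perm.mul_apply, e1, e2] at h2
  exact hc (h2.trans rfl)

lemma tri_eq {x y z : Fin n} (hxy : x ≠ y) (hxz : x ≠ z) (hyz : y ≠ z) :
    Equiv.swap x y * Equiv.swap x z * Equiv.swap y z = Equiv.swap x z := by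
  have h1 : z ≠ x := Ne.symm hxz
  have h2 : z ≠ y := Ne.symm hyz
  have h3 : y ≠ x := Ne.symm hxy
  ext w
  by_cases hwx : w = x <;> by_cases hwy : w = y <;> by_cases hwz : w = z <;>
    simp_all [Perm.mul_apply, Equiv.swap_apply_def]

lemma tri_sq_eq_one {x y z : Fin n} (hxy : x ≠ y) (hxz : x ≠ z) (hyz : y ≠ z) :
    (Equiv.swap x y * Equiv.swap x z * Equiv.swap y z) ^ 2 = 1 := by
  rw [tri_eq hxy hxz hyz, sq, Equiv.swap_mul_self]

lemma exists_third (hn : 3 ≤ n) (i j : Fin n) : ∃ k : Fin n, k ≠ i ∧ k ≠ j := by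
  by_contra h
  push_neg at h
  have hsub : (Finset.univ : Finset (Fin n)) ⊆ {i, j} := by
    intro k _
    rcases eq_or_ne k i with rfl | hk
    · simp
    · simp [h k hk]
  have := Finset.card_le_card hsub
  rw [Finset.card_univ, Fintype.card_fin] at this
  have h2 : ({i, j} : Finset (Fin n)).card ≤ 2 := by
    apply le_trans (Finset.card_insert_le _ _)
    simp
  omega

lemma exists_edge_at {S : Set (Perm (Fin n))} (hgen : Subgroup.closure S = ⊤) (hn : 3 ≤ n)
    (i : Fin n) : ∃ s ∈ S, s i ≠ i := by
  by_contra h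
  push_neg at h
  obtain ⟨k, hki, -⟩ := exists_third hn i i
  have hmem : Equiv.swap i k ∈ Subgroup.closure S := by rw [hgen]; trivial
  have hfix : ∀ g ∈ Subgroup.closure S, g i = i := by
    intro g hg
    induction hg using Subgroup.closure_induction with
    | mem x hx => exact h x hx
    | one => rfl
    | mul x y hx hy px py => rw [Perm.mul_apply, py, px]
    | inv x hx px => exact Perm.inv_eq_iff_eq.mpr px.symm
  have := hfix _ hmem
  rw [Equiv.swap_apply_left] at this
  exact hki this

lemma exists_second_edge {S : Set (Perm (Fin n))} (hgen : Subgroup.closure S = ⊤) (hn : 3 ≤ n)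
    {i j : Fin n} (hij : Equiv.swap i j ∈ S) (hne : i ≠ j) :
    ∃ t ∈ S, t ≠ Equiv.swap i j ∧ (t i ≠ i ∨ t j ≠ j) := by
  by_contra h
  push_neg at h
  -- every generator maps {i,j} into {i,j}
  have key : ∀ g ∈ Subgroup.closure S, (g i = i ∨ g i = j) ∧ (g j = i ∨ g j = j) := by
    intro g hg
    induction hg using Subgroup.closure_induction with
    | mem x hx =>
      rcases eq_or_ne x (Equiv.swap i j) with rfl | hxne
      · constructor
        · right; exact Equiv.swap_apply_left i j
        · left; exact Equiv.swap_apply_right i j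
      · obtain ⟨h1, h2⟩ := h x hx hxne
        exact ⟨Or.inl h1, Or.inr h2⟩
    | one => exact ⟨Or.inl rfl, Or.inr rfl⟩
    | mul x y hx hy px py =>
      constructor
      · rcases py.1 with h1 | h1 <;> rw [Perm.mul_apply, h1]
        · exact px.1
        · exact px.2
      · rcases py.2 with h1 | h1 <;> rw [Perm.mul_apply, h1]
        · exact px.1
        · exact px.2
    | inv x hx px =>
      have hxij : x i ≠ x j := fun e => hne (x.injective e)
      rcases px.1 with h1 | h1 <;> rcases px.2 with h2 | h2
      · exact absurd (h1.trans h2.symm) hxij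
      · exact ⟨Or.inl (Perm.inv_eq_iff_eq.mpr h1.symm), Or.inr (Perm.inv_eq_iff_eq.mpr h2.symm)⟩
      · exact ⟨Or.inr (Perm.inv_eq_iff_eq.mpr h2.symm), Or.inl (Perm.inv_eq_iff_eq.mpr h1.symm)⟩
      · exact absurd (h1.trans h2.symm) hxij
  obtain ⟨k, hki, hkj⟩ := exists_third hn i j
  have hmem : Equiv.swap i k ∈ Subgroup.closure S := by rw [hgen]; trivial
  have := (key _ hmem).1
  rw [Equiv.swap_apply_left] at this
  rcases this with h1 | h1
  · exact hki h1
  · exact hkj h1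

lemma sq_transport (α : Perm (Fin n) ≃* Perm (Fin n)) {A B C : Perm (Fin n)} :
    (α A * α B * α C) ^ 2 = α ((A * B * C) ^ 2) := by
  rw [map_pow, map_mul, map_mul]

/-- If `A,B,C ∈ S` are pairwise distinct and share a common moved point `v`,
and `α A, α B` both move `w`, then `α C` moves `w` as well. -/
lemma star_img (hS : ∀ s ∈ S, s.IsSwap) (α : Perm (Fin n) ≃* Perm (Fin n))
    (hα : ∀ s ∈ S, α s ∈ S) {A B C : Perm (Fin n)} (hA : A ∈ S) (hB : B ∈ S) (hC : C ∈ S)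
    (hAB : A ≠ B) (hAC : A ≠ C) (hBC : B ≠ C)
    {v : Fin n} (hAv : A v ≠ v) (hBv : B v ≠ v) (hCv : C v ≠ v)
    {w : Fin n} (hAw : α A w ≠ w) (hBw : α B w ≠ w) : α C w ≠ w := by
  intro hCw
  -- original shapes
  obtain ⟨a, hav, rfl⟩ := norm_form (hS A hA) hAv
  obtain ⟨b, hbv, rfl⟩ := norm_form (hS B hB) hBv
  obtain ⟨c, hcv, rfl⟩ := norm_form (hS C hC) hCv
  have hab : a ≠ b := fun h => hAB (by rw [h])
  have hac : a ≠ c := fun h => hAC (by rw [h])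
  have hbc : b ≠ c := fun h => hBC (by rw [h])
  -- image swaps
  have hiA := hS _ (hα _ hA)
  have hiB := hS _ (hα _ hB)
  have hiC := hS _ (hα _ hC)
  have hABi : α (Equiv.swap v a) ≠ α (Equiv.swap v b) := fun h => hAB (α.injective h)
  have hACi : α (Equiv.swap v a) ≠ α (Equiv.swap v c) := fun h => hAC (α.injective h)
  have hBCi : α (Equiv.swap v b) ≠ α (Equiv.swap v c) := fun h => hBC (α.injective h)
  -- images of A and C do not commute, so they share a point y ∈ {w, a'}
  obtain ⟨a', haw, hfA⟩ := norm_form hiA hAw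
  obtain ⟨b', hbw, hfB⟩ := norm_form hiB hBw
  have hncAC : α (Equiv.swap v a) * α (Equiv.swap v c) ≠ α (Equiv.swap v c) * α (Equiv.swap v a) := by
    intro h
    exact noncomm_of_common (hS _ hA) (hS _ hC) hAC hAv hCv
      (α.injective (by rw [map_mul, map_mul]; exact h))
  have hncBC : α (Equiv.swap v b) * α (Equiv.swap v c) ≠ α (Equiv.swap v c) * α (Equiv.swap v b) := by
    intro h
    exact noncomm_of_common (hS _ hB) (hS _ hC) hBC hBv hCv
      (α.injective (by rw [map_mul, map_mul]; exact h))
  obtain ⟨y, hyA, hyC⟩ := exists_common_of_noncomm hiA hiC hncAC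
  obtain ⟨z, hzB, hzC⟩ := exists_common_of_noncomm hiB hiC hncBC
  -- y ≠ w since α C fixes w
  have hyw : y ≠ w := fun h => hyC (h ▸ hCw)
  have hzw : z ≠ w := fun h => hzC (h ▸ hCw)
  -- y ∈ {w, a'} hence y = a'
  have hya : y = a' := by
    rw [hfA] at hyA
    rcases (moved_swap_iff (Ne.symm haw)).mp hyA with h | h
    · exact absurd h hyw
    · exact h
  have hzb : z = b' := by
    rw [hfB] at hzB
    rcases (moved_swap_iff (Ne.symm hbw)).mp hzB with h | h
    · exact absurd h hzw
    · exact h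
  have hyC' : α (Equiv.swap v c) a' ≠ a' := hya ▸ hyC
  have hzC' : α (Equiv.swap v c) b' ≠ b' := hzb ▸ hzC
  -- α C moves a' and b', a' ≠ b'
  have ha'b' : a' ≠ b' := by
    intro h
    subst h
    -- then α A and α B are both swap w a', equal
    exact hABi (hfA.trans hfB.symm)
  have hfC : α (Equiv.swap v c) = Equiv.swap a' b' := by
    obtain ⟨x2, y2, hne2, h2⟩ := hiC
    have h3 : ∀ u, α (Equiv.swap v c) u ≠ u → (u = x2 ∨ u = y2) := by
      intro u hu; rw [h2] at hu; exact (moved_swap_iff hne2).mp hu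
    -- use eq_swap_of_moves-style: α C moves a' and b'
    rcases h3 _ hyC' with h4 | h4 <;> rcases h3 _ hzC' with h5 | h5
    · exact absurd (h4.trans h5.symm) ha'b'
    · rw [h2, ← h4, ← h5]
    · rw [h2, ← h4, ← h5, Equiv.swap_comm]
    · exact absurd (h4.trans h5.symm) ha'b'
  -- now images form a triangle (w, a', b') : square of product is 1
  have himgsq : (α (Equiv.swap v a) * α (Equiv.swap v b) * α (Equiv.swap v c)) ^ 2 = 1 := by
    rw [hfA, hfB, hfC]
    exact tri_sq_eq_one (Ne.symm haw) (Ne.symm hbw) ha'b'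
  rw [sq_transport α] at himgsq
  have horig : ((Equiv.swap v a * Equiv.swap v b * Equiv.swap v c) ^ 2) = 1 := by
    have := α.injective (himgsq.trans (map_one α).symm)
    exact this
  exact star_sq_ne_one hav hbv hcv hab hac hbc horig

def Qprop (S : Set (Perm (Fin n))) (α : Perm (Fin n) ≃* Perm (Fin n)) (i v : Fin n) : Prop :=
  (∀ s ∈ S, s i ≠ i → α s v ≠ v) ∧
  (∀ s ∈ S, ∀ t ∈ S, ∀ j, s i ≠ i → s j ≠ j → j ≠ i → t j ≠ j → t ≠ s →
    α t ((α s) v) ≠ (α s) v)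

lemma noncomm_img (α : Perm (Fin n) ≃* Perm (Fin n)) {s t : Perm (Fin n)}
    (h : s * t ≠ t * s) : α s * α t ≠ α t * α s := by
  intro h2
  exact h (α.injective (by rw [map_mul, map_mul]; exact h2))

lemma exists_Q {S : Set (Perm (Fin n))} (hS : ∀ s ∈ S, s.IsSwap)
    (hgen : Subgroup.closure S = ⊤) (hn : 3 ≤ n)
    (α : Perm (Fin n) ≃* Perm (Fin n)) (hα : ∀ s ∈ S, α s ∈ S) (i : Fin n) :
    ∃ v, Qprop S α i v := by
  obtain ⟨s₀, hs₀S, hs₀i⟩ := exists_edge_at (S := S) hgen hn i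
  by_cases h2 : ∃ t ∈ S, t ≠ s₀ ∧ t i ≠ i
  · -- degree ≥ 2
    obtain ⟨t₀, ht₀S, ht₀ne, ht₀i⟩ := h2
    have hnc : s₀ * t₀ ≠ t₀ * s₀ :=
      noncomm_of_common (hS _ hs₀S) (hS _ ht₀S) (Ne.symm ht₀ne) hs₀i ht₀i
    obtain ⟨w, hw1, hw2⟩ := exists_common_of_noncomm (hS _ (hα _ hs₀S)) (hS _ (hα _ ht₀S))
      (noncomm_img α hnc)
    have key1 : ∀ s ∈ S, s i ≠ i → α s w ≠ w := by
      intro s hs hsi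
      rcases eq_or_ne s s₀ with rfl | hss₀
      · exact hw1
      rcases eq_or_ne s t₀ with rfl | hst₀
      · exact hw2
      exact star_img hS α hα hs₀S ht₀S hs (Ne.symm ht₀ne) (Ne.symm hss₀) (Ne.symm hst₀)
        hs₀i ht₀i hsi hw1 hw2
    refine ⟨w, key1, ?_⟩
    intro s hsS t htS j hsi hsj hji htj hts
    have hij : i ≠ j := Ne.symm hji
    have hsij : s = Equiv.swap i j := eq_swap_of_moves (hS _ hsS) hsi hsj hij
    have hti : t i = i := by
      by_contra hti
      have : t = Equiv.swap i j := eq_swap_of_moves (hS _ htS) hti htj hij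
      exact hts (this.trans hsij.symm)
    obtain ⟨u, huS, hui, hus⟩ : ∃ u ∈ S, u i ≠ i ∧ u ≠ s := by
      rcases eq_or_ne s s₀ with rfl | h
      · exact ⟨t₀, ht₀S, ht₀i, ht₀ne⟩
      · exact ⟨s₀, hs₀S, hs₀i, fun e => h e.symm⟩
    have hut : u ≠ t := fun e => (e ▸ hui) hti
    have hsw : α s w ≠ w := key1 s hsS hsi
    obtain ⟨c, hcw, hfs⟩ := norm_form (hS _ (hα _ hsS)) hsw
    have hsvc : (α s) w = c := by rw [hfs]; exact Equiv.swap_apply_left w c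
    rw [hsvc]
    -- common point of α s, α t
    have hnc2 : s * t ≠ t * s :=
      noncomm_of_common (hS _ hsS) (hS _ htS) (Ne.symm hts) hsj htj
    obtain ⟨z, hz1, hz2⟩ := exists_common_of_noncomm (hS _ (hα _ hsS)) (hS _ (hα _ htS))
      (noncomm_img α hnc2)
    have hzwc : z = w ∨ z = c := by rw [hfs] at hz1; exact (moved_swap_iff (Ne.symm hcw)).mp hz1
    rcases hzwc with hzz | hzz
    · -- z = w : α t moves w, derive contradiction
      exfalso
      have htw : α t w ≠ w := hzz ▸ hz2
      have huw : α u w ≠ w := key1 u huS hui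
      by_cases hcom : u * t = t * u
      · have : α u * α t ≠ α t * α u :=
          noncomm_of_common (hS _ (hα _ huS)) (hS _ (hα _ htS))
            (fun e => hut (α.injective e)) huw htw
        exact this (by rw [← map_mul, ← map_mul, hcom])
      · obtain ⟨p, hp1, hp2⟩ := exists_common_of_noncomm (hS _ huS) (hS _ htS) hcom
        obtain ⟨q, hqi, hfu⟩ := norm_form (hS _ huS) hui
        have hqj : q ≠ j := by
          rintro rfl
          exact hus (hfu.trans hsij.symm)
        obtain ⟨r, hrj, hft⟩ := norm_form (hS _ htS) htj
        have hri : r ≠ i := by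
          rintro rfl
          rw [hft, Equiv.swap_apply_right] at hti
          exact hji hti
        have hpi : p ≠ i := by rintro rfl; exact hp2 hti
        have hpq : p = q := by
          have hh := hp1
          rw [hfu] at hh
          rcases (moved_swap_iff (Ne.symm hqi)).mp hh with h | h
          · exact absurd h hpi
          · exact h
        have hqr : q = r := by
          have hh := hp2
          rw [hft] at hh
          rcases (moved_swap_iff (Ne.symm hrj)).mp hh with h | h
          · exact absurd (hpq.symm.trans h) hqj
          · exact hpq ▸ h
        rw [← hqr] at hft
        have horig : (s * u * t) ^ 2 = 1 := by
          rw [hsij, hfu, hft]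
          exact tri_sq_eq_one hij (Ne.symm hqi) (Ne.symm hqj)
        obtain ⟨u', hu'w, hfiu⟩ := norm_form (hS _ (hα _ huS)) huw
        obtain ⟨t', ht'w, hfit⟩ := norm_form (hS _ (hα _ htS)) htw
        have hcu' : c ≠ u' := by
          rintro rfl
          exact hus (α.injective (hfiu.trans hfs.symm))
        have hct' : c ≠ t' := by
          rintro rfl
          exact hts (α.injective (hfit.trans hfs.symm))
        have hu't' : u' ≠ t' := by
          rintro rfl
          exact hut (α.injective (hfiu.trans hfit.symm))
        have himg : (α s * α u * α t) ^ 2 ≠ 1 := by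
          rw [hfs, hfiu, hfit]
          exact star_sq_ne_one hcw hu'w ht'w hcu' hct' hu't'
        apply himg
        rw [← map_mul, ← map_mul, ← map_pow, horig, map_one]
    · -- z = c : done
      exact hzz ▸ hz2
  · -- degree 1
    push_neg at h2
    have huniq : ∀ t ∈ S, t i ≠ i → t = s₀ := by
      intro t ht hti
      by_contra hne
      exact hti (h2 t ht hne)
    obtain ⟨j₀, hj₀i, hfs₀⟩ := norm_form (hS _ hs₀S) hs₀i
    have hij₀ : i ≠ j₀ := Ne.symm hj₀i
    obtain ⟨t₀, ht₀S, ht₀ne, hd⟩ := exists_second_edge (S := S) hgen hn (hfs₀ ▸ hs₀S) hij₀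
    have ht₀s₀ : t₀ ≠ s₀ := by rw [hfs₀]; exact ht₀ne
    have ht₀j : t₀ j₀ ≠ j₀ := by
      rcases hd with h | h
      · exact absurd (huniq t₀ ht₀S h) ht₀s₀
      · exact h
    have hs₀j : s₀ j₀ ≠ j₀ := by
      rw [hfs₀, Equiv.swap_apply_right]
      exact hij₀
    have hnc : s₀ * t₀ ≠ t₀ * s₀ :=
      noncomm_of_common (hS _ hs₀S) (hS _ ht₀S) (Ne.symm ht₀s₀) hs₀j ht₀j
    obtain ⟨w, hw1, hw2⟩ := exists_common_of_noncomm (hS _ (hα _ hs₀S)) (hS _ (hα _ ht₀S))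
      (noncomm_img α hnc)
    obtain ⟨c, hcw, hfis⟩ := norm_form (hS _ (hα _ hs₀S)) hw1
    refine ⟨c, ?_, ?_⟩
    · intro s hs hsi
      rw [huniq s hs hsi, hfis]
      rw [Equiv.swap_apply_right]
      exact Ne.symm hcw
    · intro s hsS t htS j hsi hsj hji htj hts
      have hss₀ : s = s₀ := huniq s hsS hsi
      subst hss₀
      have hjj₀ : j = j₀ := by
        rw [hfs₀] at hsj
        rcases (moved_swap_iff hij₀).mp hsj with rfl | h
        · exact absurd rfl hji
        · exact h
      subst hjj₀
      have hsc : (α s) c = w := by rw [hfis]; exact Equiv.swap_apply_right w c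
      rw [hsc]
      rcases eq_or_ne t t₀ with rfl | htt₀
      · exact hw2
      · exact star_img hS α hα hs₀S ht₀S htS (Ne.symm ht₀s₀) (Ne.symm hts) (fun e => htt₀ e.symm)
          hs₀j ht₀j htj hw1 hw2

lemma symm_maps {S : Set (Perm (Fin n))} (α : Perm (Fin n) ≃* Perm (Fin n))
    (hα : ∀ s ∈ S, α s ∈ S) : ∀ s ∈ S, α.symm s ∈ S := by
  have hbij : Set.BijOn α S S :=
    ((Set.toFinite S).injOn_iff_bijOn_of_mapsTo hα).mp (α.injective.injOn)
  intro s hs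
  obtain ⟨x, hxS, hx⟩ := hbij.surjOn hs
  have : α.symm s = x := by rw [← hx]; exact α.symm_apply_apply x
  rw [this]; exact hxS

lemma swap_eq_of_two {X Y : Perm (Fin n)} (hX : X.IsSwap) (hY : Y.IsSwap) {m : Fin n}
    (hXm : X m ≠ m) (hYm : Y m ≠ m) (hYXm : Y (X m) ≠ X m) : Y = X := by
  obtain ⟨e, hem, hfX⟩ := norm_form hX hXm
  have hXme : X m = e := by rw [hfX]; exact Equiv.swap_apply_left m e
  rw [hXme] at hYXm
  exact (eq_swap_of_moves hY hYm hYXm (Ne.symm hem)).trans hfX.symm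

lemma swap_eq_cases {x y i j : Fin n} (hij : i ≠ j) (h : Equiv.swap x y = Equiv.swap i j) :
    (x = i ∧ y = j) ∨ (x = j ∧ y = i) := by
  have hxy : x ≠ y := by
    rintro rfl
    rw [Equiv.swap_self] at h
    exact swap_ne_one' hij (h.symm ▸ rfl)
  have hmi : Equiv.swap x y i ≠ i := by rw [h, Equiv.swap_apply_left]; exact Ne.symm hij
  rcases (moved_swap_iff hxy).mp hmi with h1 | h1
  · left
    constructor
    · exact h1.symm
    · have := congrArg (fun p : Perm (Fin n) => p i) h
      simp only [Equiv.swap_apply_left] at this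
      rw [← h1, Equiv.swap_apply_left] at this
      exact this
  · right
    constructor
    · have := congrArg (fun p : Perm (Fin n) => p i) h
      simp only [Equiv.swap_apply_left] at this
      rw [← h1, Equiv.swap_apply_right] at this
      exact this
    · exact h1.symm

lemma exists_vertex_fun {S : Set (Perm (Fin n))} (hS : ∀ s ∈ S, s.IsSwap)
    (hgen : Subgroup.closure S = ⊤) (hn : 3 ≤ n)
    (α : Perm (Fin n) ≃* Perm (Fin n)) (hα : ∀ s ∈ S, α s ∈ S) :
    ∃ a : Fin n → Fin n, ∀ i j, Equiv.swap i j ∈ S →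
      α (Equiv.swap i j) = Equiv.swap (a i) (a j) := by
  choose a ha using exists_Q hS hgen hn α hα
  refine ⟨a, ?_⟩
  intro i j hij
  have hijne : i ≠ j := mem_S_ne hS hij
  have hsi : Equiv.swap i j i ≠ i := by rw [Equiv.swap_apply_left]; exact Ne.symm hijne
  have hsj : Equiv.swap i j j ≠ j := by rw [Equiv.swap_apply_right]; exact hijne
  have hai : α (Equiv.swap i j) (a i) ≠ a i := (ha i).1 _ hij hsi
  have haj : α (Equiv.swap i j) (a j) ≠ a j := (ha j).1 _ hij hsj
  have hisw : (α (Equiv.swap i j)).IsSwap := hS _ (hα _ hij)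
  have hkey : a i ≠ a j := by
    intro heq
    obtain ⟨t, htS, hts, hd⟩ := exists_second_edge (S := S) hgen hn hij hijne
    rcases hd with hti | htj
    · -- t moves i : use Qprop at j
      have h1 := (ha j).2 _ hij _ htS i hsj hsi hijne hti hts
      -- α t moves (α s)(a j) and moves a i = a j
      have h2 : α t (a i) ≠ a i := (ha i).1 _ htS hti
      rw [heq] at h2
      have := swap_eq_of_two hisw (hS _ (hα _ htS)) haj h2 h1
      exact hts (α.injective this)
    · -- t moves j : use Qprop at i
      have h1 := (ha i).2 _ hij _ htS j hsi hsj (Ne.symm hijne) htj hts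
      have h2 : α t (a j) ≠ a j := (ha j).1 _ htS htj
      rw [← heq] at h2
      have := swap_eq_of_two hisw (hS _ (hα _ htS)) hai h2 h1
      exact hts (α.injective this)
  obtain ⟨u, v, huv, hf⟩ := hisw
  rw [hf] at hai haj ⊢
  rcases (moved_swap_iff huv).mp hai with h1 | h1 <;>
    rcases (moved_swap_iff huv).mp haj with h2 | h2
  · exact absurd (h1.trans h2.symm) hkey
  · rw [h1, h2]
  · rw [h1, h2, Equiv.swap_comm]
  · exact absurd (h1.trans h2.symm) hkey

lemma left_inv_fun {S : Set (Perm (Fin n))} (hS : ∀ s ∈ S, s.IsSwap)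
    (hgen : Subgroup.closure S = ⊤) (hn : 3 ≤ n)
    (α : Perm (Fin n) ≃* Perm (Fin n)) (hα : ∀ s ∈ S, α s ∈ S)
    (a b : Fin n → Fin n)
    (hfa : ∀ i j, Equiv.swap i j ∈ S → α (Equiv.swap i j) = Equiv.swap (a i) (a j))
    (hfb : ∀ i j, Equiv.swap i j ∈ S → α.symm (Equiv.swap i j) = Equiv.swap (b i) (b j)) :
    ∀ i, b (a i) = i := by
  have pair : ∀ i j, Equiv.swap i j ∈ S →
      (b (a i) = i ∧ b (a j) = j) ∨ (b (a i) = j ∧ b (a j) = i) := by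
    intro i j hij
    have hijne : i ≠ j := mem_S_ne hS hij
    have himg : Equiv.swap (a i) (a j) ∈ S := by rw [← hfa i j hij]; exact hα _ hij
    have : Equiv.swap (b (a i)) (b (a j)) = Equiv.swap i j := by
      rw [← hfb _ _ himg, ← hfa i j hij, α.symm_apply_apply]
    exact swap_eq_cases hijne this
  have claim2 : ∀ i j k, Equiv.swap i j ∈ S → Equiv.swap i k ∈ S → j ≠ k → b (a i) = i := by
    intro i j k h1 h2 hjk
    rcases pair i j h1 with ⟨h, -⟩ | ⟨h, -⟩
    · exact h
    · rcases pair i k h2 with ⟨h', -⟩ | ⟨h', -⟩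
      · exact h'
      · exact absurd (h.symm.trans h') hjk
  intro i
  obtain ⟨s, hsS, hsi⟩ := exists_edge_at (S := S) hgen hn i
  obtain ⟨j, hji, hfs⟩ := norm_form (hS _ hsS) hsi
  rw [hfs] at hsS
  by_cases h2 : ∃ t ∈ S, t ≠ Equiv.swap i j ∧ t i ≠ i
  · obtain ⟨t, htS, hts, hti⟩ := h2
    obtain ⟨k, hki, hft⟩ := norm_form (hS _ htS) hti
    have hjk : j ≠ k := by
      rintro rfl
      exact hts (hft)
    rw [hft] at htS
    exact claim2 i j k hsS htS hjk
  · push_neg at h2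
    obtain ⟨t, htS, hts, hd⟩ := exists_second_edge (S := S) hgen hn hsS (Ne.symm hji)
    have htj : t j ≠ j := by
      rcases hd with h | h
      · exact absurd (h2 t htS) (by intro hh; exact h (hh hts))
      · exact h
    obtain ⟨k, hkj, hft⟩ := norm_form (hS _ htS) htj
    have hki : i ≠ k := by
      rintro rfl
      exact hts (hft.trans (Equiv.swap_comm j i))
    have hsS' : Equiv.swap j i ∈ S := by rw [Equiv.swap_comm]; exact hsS
    rw [hft] at htS
    have hbaj : b (a j) = j := claim2 j i k hsS' htS hki
    rcases pair i j hsS with ⟨h, -⟩ | ⟨-, h⟩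
    · exact h
    · exact absurd (hbaj.symm.trans h) (Ne.symm hji).symm

lemma transGraph_adj {S : Set (Perm (Fin n))} {x y : Fin n} :
    (TransGraph n S).Adj x y ↔ x ≠ y ∧ Equiv.swap x y ∈ S := by
  show (SimpleGraph.fromRel _).Adj x y ↔ _
  rw [SimpleGraph.fromRel_adj]
  constructor
  · rintro ⟨h1, h2 | h2⟩
    · exact ⟨h1, h2⟩
    · exact ⟨h1, (Equiv.swap_comm x y) ▸ h2⟩
  · rintro ⟨h1, h2⟩
    exact ⟨h1, Or.inl h2⟩

lemma feng {S : Set (Perm (Fin n))} (hS : ∀ s ∈ S, s.IsSwap)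
    (hgen : Subgroup.closure S = ⊤) (hn : 3 ≤ n)
    (α : Perm (Fin n) ≃* Perm (Fin n)) (hα : ∀ s ∈ S, α s ∈ S) :
    ∃ aE : Perm (Fin n), aE ∈ graphAut (TransGraph n S) ∧ ∀ g, α g = aE * g * aE⁻¹ := by
  have hα' := symm_maps α hα
  obtain ⟨a, hfa⟩ := exists_vertex_fun hS hgen hn α hα
  obtain ⟨b, hfb⟩ := exists_vertex_fun hS hgen hn α.symm hα'
  have hba : ∀ i, b (a i) = i := left_inv_fun hS hgen hn α hα a b hfa hfb
  have hab : ∀ i, a (b i) = i := by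
    refine left_inv_fun hS hgen hn α.symm hα' b a hfb ?_
    intro i j h
    rw [MulEquiv.symm_symm]
    exact hfa i j h
  let aE : Perm (Fin n) := ⟨a, b, hba, hab⟩
  have haE : ∀ x, aE x = a x := fun _ => rfl
  have hmem : aE ∈ graphAut (TransGraph n S) := by
    intro x y
    rw [transGraph_adj, transGraph_adj, haE, haE]
    constructor
    · rintro ⟨h1, h2⟩
      refine ⟨fun e => h1 (by rw [e]), ?_⟩
      have := hfb _ _ h2
      rw [hba, hba] at this
      rw [← this]
      exact hα' _ h2
    · rintro ⟨h1, h2⟩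
      refine ⟨fun e => h1 (by
        have := congrArg b e
        rw [hba, hba] at this
        exact this), ?_⟩
      rw [← hfa _ _ h2]
      exact hα _ h2
  refine ⟨aE, hmem, ?_⟩
  intro g
  have hg : g ∈ Subgroup.closure S := by rw [hgen]; trivial
  induction hg using Subgroup.closure_induction with
  | mem s hs =>
    obtain ⟨i, j, hij, rfl⟩ := hS _ hs
    rw [hfa i j hs, ← Equiv.swap_apply_apply aE i j, haE, haE]
  | one => simp
  | mul x y hx hy px py => rw [map_mul, px, py]; group
  | inv x hx px => rw [map_inv, px]; group

lemma cay_adj {x y : Perm (Fin n)} :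
    (Cay n S).Adj x y ↔ x ≠ y ∧ (y * x⁻¹ ∈ S ∨ x * y⁻¹ ∈ S) := by
  show (SimpleGraph.fromRel _).Adj x y ↔ _
  rw [SimpleGraph.fromRel_adj]

lemma mulRight_mem_cay (c : Perm (Fin n)) : Equiv.mulRight c ∈ graphAut (Cay n S) := by
  intro x y
  simp only [Equiv.coe_mulRight]
  rw [cay_adj, cay_adj]
  constructor
  · rintro ⟨h1, h2⟩
    refine ⟨fun e => h1 (by rw [e]), ?_⟩
    simpa [mul_inv_rev, mul_assoc] using h2
  · rintro ⟨h1, h2⟩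
    refine ⟨fun e => h1 (mul_right_cancel e), ?_⟩
    simpa [mul_inv_rev, mul_assoc] using h2

lemma conj_mem_S (hS : ∀ s ∈ S, s.IsSwap) {a : Perm (Fin n)}
    (ha : a ∈ graphAut (TransGraph n S)) {g : Perm (Fin n)} (hg : g ∈ S) :
    a * g * a⁻¹ ∈ S := by
  obtain ⟨i, j, hij, rfl⟩ := hS _ hg
  rw [← Equiv.swap_apply_apply]
  have h1 : (TransGraph n S).Adj i j := transGraph_adj.mpr ⟨hij, hg⟩
  have h2 := (ha i j).mpr h1
  exact (transGraph_adj.mp h2).2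

lemma mulLeft_mem_cay (hS : ∀ s ∈ S, s.IsSwap) {a : Perm (Fin n)}
    (ha : a ∈ graphAut (TransGraph n S)) : Equiv.mulLeft a ∈ graphAut (Cay n S) := by
  have key : ∀ g : Perm (Fin n), g ∈ S ↔ a * g * a⁻¹ ∈ S := by
    intro g
    constructor
    · exact conj_mem_S hS ha
    · intro h
      have := conj_mem_S hS (inv_mem ha) h
      simpa [mul_assoc] using this
  intro x y
  simp only [Equiv.coe_mulLeft]
  have h3 : a * y * (a * x)⁻¹ = a * (y * x⁻¹) * a⁻¹ := by
    simp [mul_inv_rev, mul_assoc]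
  have h4 : a * x * (a * y)⁻¹ = a * (x * y⁻¹) * a⁻¹ := by
    simp [mul_inv_rev, mul_assoc]
  rw [cay_adj, cay_adj, h3, h4]
  constructor
  · rintro ⟨h1, h2⟩
    refine ⟨fun e => h1 (by rw [e]), ?_⟩
    rcases h2 with h2 | h2
    · exact Or.inl ((key _).mpr h2)
    · exact Or.inr ((key _).mpr h2)
  · rintro ⟨h1, h2⟩
    refine ⟨fun e => h1 (mul_left_cancel e), ?_⟩
    rcases h2 with h2 | h2
    · exact Or.inl ((key _).mp h2)
    · exact Or.inr ((key _).mp h2)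

lemma center_triv (hn : 3 ≤ n) {c : Perm (Fin n)} (h : ∀ x, c * x = x * c) : c = 1 := by
  by_contra hc
  have : ∃ x, c x ≠ x := by
    by_contra hx
    push_neg at hx
    exact hc (Equiv.ext hx)
  obtain ⟨x, hx⟩ := this
  obtain ⟨z, hzx, hzy⟩ := exists_third hn x (c x)
  have := congrArg (fun p : Perm (Fin n) => p x) (h (Equiv.swap (c x) z))
  simp only [Perm.mul_apply] at this
  rw [Equiv.swap_apply_of_ne_of_ne (fun e => hx e.symm) (Ne.symm hzx),
    Equiv.swap_apply_left] at this
  exact hzy this.symm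

end CayFeng

open CayFeng

/-- Let `n ≥ 3` and let `S` be a set of transpositions generating `Sₙ`
such that the Cayley graph `Cay(Sₙ, S)` is normal (the image of the right regular
representation is a normal subgroup of `Aut(Cay(Sₙ, S))`). Then
`Aut(Cay(Sₙ, S)) ≅ Sₙ × Aut(T(S))`, where `T(S)` is the transposition graph of `S`. -/
theorem aut_normal_cayley_eq_prod (n : ℕ) (hn : 3 ≤ n) (S : Set (Equiv.Perm (Fin n)))
    (hS : ∀ s ∈ S, Equiv.Perm.IsSwap s)
    (hgen : Subgroup.closure S = ⊤)
    (hnormal : ((Rrep n).subgroupOf (graphAut (Cay n S))).Normal) :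
    Nonempty
      ((graphAut (Cay n S)) ≃* Equiv.Perm (Fin n) × (graphAut (TransGraph n S))) := by
  classical
  let Φ : Perm (Fin n) × ↥(graphAut (TransGraph n S)) →* ↥(graphAut (Cay n S)) :=
    MonoidHom.mk' (fun p => ⟨Equiv.mulLeft (p.2 : Perm (Fin n)) * Equiv.mulRight p.1⁻¹,
        mul_mem (mulLeft_mem_cay hS p.2.2) (mulRight_mem_cay _)⟩)
      (by
        rintro ⟨c, a⟩ ⟨d, b⟩
        apply Subtype.ext
        apply Equiv.ext
        intro x
        show (Equiv.mulLeft ((a : Perm (Fin n)) * b) * Equiv.mulRight ((c * d))⁻¹) x =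
          (Equiv.mulLeft (a : Perm (Fin n)) * Equiv.mulRight c⁻¹)
            ((Equiv.mulLeft (b : Perm (Fin n)) * Equiv.mulRight d⁻¹) x)
        simp only [Perm.mul_apply, Equiv.coe_mulLeft, Equiv.coe_mulRight, mul_inv_rev]
        simp [mul_assoc])
  have hΦapp : ∀ (p : Perm (Fin n) × ↥(graphAut (TransGraph n S))) (x : Perm (Fin n)),
      (Φ p : Perm (Perm (Fin n))) x = (p.2 : Perm (Fin n)) * (x * p.1⁻¹) := by
    intro p x; rfl
  have hinj : Function.Injective Φ := by
    rw [injective_iff_map_eq_one]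
    rintro ⟨c, a⟩ h
    have h' : ∀ x : Perm (Fin n), (a : Perm (Fin n)) * (x * c⁻¹) = x := by
      intro x
      have h2 := congrArg (fun F : ↥(graphAut (Cay n S)) => (F : Perm (Perm (Fin n))) x) h
      rw [hΦapp] at h2
      simpa using h2
    have hac : (a : Perm (Fin n)) = c := by
      have := h' c
      simpa using this
    have hcx : ∀ x : Perm (Fin n), c * x = x * c := by
      intro x
      have := h' x
      rw [hac, ← mul_assoc] at this
      exact mul_inv_eq_iff_eq_mul.mp this
    have hc1 : c = 1 := center_triv hn hcx
    have ha1 : (a : Perm (Fin n)) = 1 := hac.trans hc1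
    exact Prod.ext hc1 (Subtype.ext ha1)
  have hsurj : Function.Surjective Φ := by
    rintro ⟨f, hf⟩
    set c : Perm (Fin n) := f 1 with hc
    set ψ : Perm (Perm (Fin n)) := Equiv.mulRight c⁻¹ * f with hψdef
    have memψ : ψ ∈ graphAut (Cay n S) := mul_mem (mulRight_mem_cay c⁻¹) hf
    have hψx : ∀ x, ψ x = f x * c⁻¹ := fun x => rfl
    have hψ1 : ψ 1 = 1 := by rw [hψx, ← hc]; simp
    have hψinv1 : ψ⁻¹ 1 = 1 := by
      conv_lhs => rw [← hψ1]
      exact Equiv.symm_apply_apply ψ 1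
    have hmul : ∀ x g, ψ (x * g) = ψ x * ψ g := by
      intro x g
      have hXmem : (⟨Equiv.mulRight g, mulRight_mem_cay g⟩ : ↥(graphAut (Cay n S))) ∈
          (Rrep n).subgroupOf (graphAut (Cay n S)) := by
        rw [Subgroup.mem_subgroupOf]; exact ⟨g, rfl⟩
      have hconj := hnormal.conj_mem _ hXmem ⟨ψ, memψ⟩
      rw [Subgroup.mem_subgroupOf] at hconj
      obtain ⟨d, hd⟩ := hconj
      have hd' : ψ * Equiv.mulRight g * ψ⁻¹ = Equiv.mulRight d := hd
      have h1 := congrArg (fun p : Perm (Perm (Fin n)) => p 1) hd'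
      simp only [Perm.mul_apply, Equiv.coe_mulRight, hψinv1, one_mul] at h1
      -- h1 : ψ g = d
      have h2 := congrArg (fun p : Perm (Perm (Fin n)) => p (ψ x)) hd'
      simp only [Perm.mul_apply, Equiv.coe_mulRight, Perm.inv_def, Equiv.symm_apply_apply] at h2
      rw [h2, h1]
    let ψE : Perm (Fin n) ≃* Perm (Fin n) := ⟨ψ, fun x g => hmul x g⟩
    have hψES : ∀ s ∈ S, ψE s ∈ S := by
      intro s hs
      have hadj : (Cay n S).Adj 1 s :=
        cay_adj.mpr ⟨Ne.symm (isSwap_ne_one (hS s hs)), Or.inl (by simpa using hs)⟩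
      have hadj2 := (memψ 1 s).mpr hadj
      rw [hψ1, cay_adj] at hadj2
      rcases hadj2.2 with h | h
      · exact (by simpa using h : ψ s ∈ S)
      · have hss : s⁻¹ = s := by
          obtain ⟨i, j, hij, rfl⟩ := hS s hs
          exact Equiv.swap_inv i j
        have h3 : (ψ s)⁻¹ ∈ S := by simpa using h
        have h4 : (ψ s)⁻¹ = ψ s := by
          have := map_inv ψE s
          rw [hss] at this
          exact this.symm
        rw [h4] at h3
        exact h3
    obtain ⟨aE, haEmem, hconj⟩ := feng hS hgen hn ψE hψES
    refine ⟨(c⁻¹ * aE, ⟨aE, haEmem⟩), ?_⟩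
    apply Subtype.ext
    apply Equiv.ext
    intro x
    rw [hΦapp]
    show aE * (x * (c⁻¹ * aE)⁻¹) = f x
    have h5 : ψ x * c = f x := by rw [hψx]; simp [mul_assoc]
    have h6 : ψ x = aE * x * aE⁻¹ := hconj x
    rw [← h5, h6]
    simp [mul_inv_rev, mul_assoc]
  exact ⟨(MulEquiv.ofBijective Φ ⟨hinj, hsurj⟩).symm⟩
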